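/- arXiv:math/0605044 — 2 statements merged into one kernel-verified Lean document; each statement's English description precedes it below -/
import Mathlib

section
/- Let K be a field and h(t,z) ∈ K⟨t,z⟩ be any element of the free associative algebra on t and z. Then the z-endomorphism σ_h = (x + z·h(xz−zy, z), y + h(xz−zy, z)·z) of K⟨x,y,z⟩ is a z-automorphism, and its inverse is σ_{−h}. -/
open MonoidAlgebra

noncomputable section

/-- The free associative algebra `K⟨x,y,z⟩`, realized as the monoid algebra of the
free monoid on three letters. -/
abbrev FA (K : Type) [Field K] := MonoidAlgebra K (FreeMonoid (Fin 3))

/-- The free associative algebra `K⟨t,z⟩` on two letters. -/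
abbrev FA2 (K : Type) [Field K] := MonoidAlgebra K (FreeMonoid (Fin 2))

variable (K : Type) [Field K]

/-- The generators `x = Xv 0`, `y = Xv 1`, `z = Xv 2`. -/
def Xv (i : Fin 3) : FA K := MonoidAlgebra.of K (FreeMonoid (Fin 3)) (FreeMonoid.of i)

/-- The substitution (endomorphism) sending the generators `x, y, z` to `f 0, f 1, f 2`. -/
def subst (f : Fin 3 → FA K) : FA K →ₐ[K] FA K :=
  MonoidAlgebra.lift K (FA K) (FreeMonoid (Fin 3)) (FreeMonoid.lift f)

/-- The substitution homomorphism `K⟨t,z⟩ → K⟨x,y,z⟩` sending `t ↦ f 0`, `z ↦ f 1`. -/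
def subst2 (f : Fin 2 → FA K) : FA2 K →ₐ[K] FA K :=
  MonoidAlgebra.lift K (FA K) (FreeMonoid (Fin 2)) (FreeMonoid.lift f)

/-- `h(xz - zy, z)`: the image of `h(t,z)` under `t ↦ xz - zy`, `z ↦ z`. -/
def hSub (h : FA2 K) : FA K :=
  subst2 K ![Xv K 0 * Xv K 2 - Xv K 2 * Xv K 1, Xv K 2] h

/-- The `z`-endomorphism `σ_h = (x + z·h(xz−zy,z), y + h(xz−zy,z)·z, z)`. -/
def sigmaH (h : FA2 K) : FA K →ₐ[K] FA K :=
  subst K ![Xv K 0 + Xv K 2 * hSub K h, Xv K 1 + hSub K h * Xv K 2, Xv K 2]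

lemma subst_X (f : Fin 3 → FA K) (i : Fin 3) : subst K f (Xv K i) = f i := by
  simp [subst, Xv, MonoidAlgebra.lift_of]

lemma subst2_X (f : Fin 2 → FA K) (i : Fin 2) :
    subst2 K f (MonoidAlgebra.of K (FreeMonoid (Fin 2)) (FreeMonoid.of i)) = f i := by
  simp [subst2, MonoidAlgebra.lift_of]

lemma FA_ext {φ ψ : FA K →ₐ[K] FA K} (H : ∀ i, φ (Xv K i) = ψ (Xv K i)) : φ = ψ := by
  apply MonoidAlgebra.algHom_ext'
  apply FreeMonoid.hom_eq
  exact H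
  exact Subsingleton.elim _ _

lemma sigmaH_X (h : FA2 K) (i : Fin 3) :
    sigmaH K h (Xv K i) = ![Xv K 0 + Xv K 2 * hSub K h, Xv K 1 + hSub K h * Xv K 2, Xv K 2] i :=
  subst_X K _ i

/-- `σ_h` fixes every element of the form `g(xz−zy, z)`. -/
lemma sigmaH_hSub (h g : FA2 K) : sigmaH K h (hSub K g) = hSub K g := by
  have : (sigmaH K h).comp (subst2 K ![Xv K 0 * Xv K 2 - Xv K 2 * Xv K 1, Xv K 2]) =
      subst2 K ![Xv K 0 * Xv K 2 - Xv K 2 * Xv K 1, Xv K 2] := by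
    apply MonoidAlgebra.algHom_ext'
    apply FreeMonoid.hom_eq
    intro i
    show sigmaH K h (subst2 K _ (MonoidAlgebra.of K _ (FreeMonoid.of i))) =
      subst2 K _ (MonoidAlgebra.of K _ (FreeMonoid.of i))
    rw [subst2_X]
    fin_cases i
    · show sigmaH K h (Xv K 0 * Xv K 2 - Xv K 2 * Xv K 1) = Xv K 0 * Xv K 2 - Xv K 2 * Xv K 1
      rw [map_sub, map_mul, map_mul, sigmaH_X, sigmaH_X, sigmaH_X]
      simp only [Matrix.cons_val_zero, Matrix.cons_val_one, Matrix.head_cons,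
        Matrix.cons_val_two, Matrix.tail_cons]
      noncomm_ring
    · show sigmaH K h (Xv K 2) = Xv K 2
      rw [sigmaH_X]
      simp [Matrix.cons_val_two]
    exact Subsingleton.elim _ _
  exact DFunLike.congr_fun this g

lemma hSub_neg (h : FA2 K) : hSub K (-h) = -hSub K h := by
  simp [hSub]

lemma sigmaH_comp (h : FA2 K) :
    (sigmaH K h).comp (sigmaH K (-h)) = AlgHom.id K (FA K) := by
  apply FA_ext
  intro i
  fin_cases i
  · show sigmaH K h (sigmaH K (-h) (Xv K 0)) = Xv K 0
    rw [sigmaH_X (K := K) (-h)]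
    simp only [Matrix.cons_val_zero]
    rw [hSub_neg, map_add, map_mul, map_neg, sigmaH_X, sigmaH_X, sigmaH_hSub]
    simp only [Matrix.cons_val_two, Matrix.tail_cons, Matrix.head_cons, Matrix.cons_val_zero]
    noncomm_ring
  · show sigmaH K h (sigmaH K (-h) (Xv K 1)) = Xv K 1
    rw [sigmaH_X (K := K) (-h)]
    simp only [Matrix.cons_val_one, Matrix.head_cons, Matrix.cons_val_zero]
    rw [hSub_neg, map_add, map_mul, map_neg, sigmaH_X, sigmaH_X, sigmaH_hSub]
    simp only [Matrix.cons_val_two, Matrix.tail_cons, Matrix.head_cons, Matrix.cons_val_one]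
    noncomm_ring
    abel
  · show sigmaH K h (sigmaH K (-h) (Xv K 2)) = Xv K 2
    rw [sigmaH_X (K := K) (-h)]
    simp only [Matrix.cons_val_two, Matrix.tail_cons, Matrix.head_cons]
    rw [sigmaH_X]
    simp [Matrix.cons_val_two]

/-- For any `h(t,z) ∈ K⟨t,z⟩`, the `z`-endomorphism
`σ_h = (x + z·h(xz−zy,z), y + h(xz−zy,z)·z, z)` of `K⟨x,y,z⟩` is a `z`-automorphism,
with inverse `σ₋ₕ`. -/
theorem sigmaH_is_z_automorphism_with_inverse (h : FA2 K) :
    (sigmaH K h).comp (sigmaH K (-h)) = AlgHom.id K (FA K) ∧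
    (sigmaH K (-h)).comp (sigmaH K h) = AlgHom.id K (FA K) ∧
    sigmaH K h (Xv K 2) = Xv K 2 := by
  refine ⟨sigmaH_comp K h, ?_, by rw [sigmaH_X]; simp [Matrix.cons_val_two]⟩
  have := sigmaH_comp K (-h)
  rwa [neg_neg] at this
end
end

section
/- Let K be a field and let θ be an automorphism of K⟨x,y,z⟩ which fixes both x and z. Then θ(y) = βy + r(x,z) for some β ∈ K∖{0} and some polynomial r(x,z) ∈ K⟨x,z⟩ not involving y. Consequently, if (f,g) and (f,g′) are two z-automorphisms of K⟨x,y,z⟩ with the same first coordinate f, then (f,g′) = (f,g) ∘ (x, βy + r(x,z)) for some β ∈ K∖{0} and r ∈ K⟨x,z⟩. -/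
open MonoidAlgebra

noncomputable section

variable (K : Type) [Field K]

/-- compatibility: the support of an element of a monoid algebra. -/
abbrev MonoidAlgebra.support {R M : Type} [Semiring R] (f : MonoidAlgebra R M) : Finset M :=
  f.coeff.support

instance {R M : Type} [Semiring R] : CoeFun (MonoidAlgebra R M) (fun _ => M → R) :=
  ⟨fun f => f.coeff⟩

/-! ### encoding of words into ℕ (deg-lex style) -/

def enc : List (Fin 3) → ℕ
  | [] => 0
  | i :: t => ((i : ℕ) + 1) * 4 ^ t.length + enc t

lemma enc_lt_pow (u : List (Fin 3)) : enc u < 4 ^ u.length := by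
  induction u with
  | nil => simp [enc]
  | cons i t ih =>
    have hi : (i : ℕ) + 1 ≤ 3 := by have := i.isLt; omega
    have h4 : (0:ℕ) < 4 ^ t.length := Nat.pow_pos (by norm_num)
    have : ((i : ℕ) + 1) * 4 ^ t.length ≤ 3 * 4 ^ t.length :=
      Nat.mul_le_mul_right _ hi
    simp only [enc, List.length_cons, pow_succ]
    omega

lemma pow_le_enc (u : List (Fin 3)) : 4 ^ u.length ≤ 3 * enc u + 1 := by
  induction u with
  | nil => simp [enc]
  | cons i t ih =>
    have h4 : (0:ℕ) < 4 ^ t.length := Nat.pow_pos (by norm_num)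
    have hi : 1 ≤ (i : ℕ) + 1 := by omega
    have : 4 ^ t.length ≤ ((i : ℕ) + 1) * 4 ^ t.length := by
      calc 4 ^ t.length = 1 * 4 ^ t.length := (one_mul _).symm
        _ ≤ _ := Nat.mul_le_mul_right _ hi
    simp only [enc, List.length_cons, pow_succ]
    omega

lemma enc_lt_of_length_lt {u v : List (Fin 3)} (h : u.length < v.length) : enc u < enc v := by
  have h1 := enc_lt_pow u
  have h2 := pow_le_enc v
  have h3 : 4 ^ (u.length + 1) ≤ 4 ^ v.length := Nat.pow_le_pow_right (by norm_num) h
  rw [pow_succ] at h3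
  omega

lemma length_le_of_enc_le {u v : List (Fin 3)} (h : enc u ≤ enc v) : u.length ≤ v.length := by
  by_contra hc
  exact absurd h (not_le.mpr (enc_lt_of_length_lt (by omega)))

lemma enc_inj : ∀ {u v : List (Fin 3)}, enc u = enc v → u = v := by
  intro u
  induction u with
  | nil =>
    intro v h
    cases v with
    | nil => rfl
    | cons j t =>
      exfalso
      have : (0:ℕ).succ ≤ (j:ℕ) + 1 := by omega
      have h4 : (0:ℕ) < 4 ^ t.length := Nat.pow_pos (by norm_num)
      simp only [enc] at h
      nlinarith [enc t, Nat.zero_le (enc t)]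
  | cons i t ih =>
    intro v h
    cases v with
    | nil =>
      exfalso
      have h4 : (0:ℕ) < 4 ^ t.length := Nat.pow_pos (by norm_num)
      simp only [enc] at h
      nlinarith
    | cons j s =>
      have hlen : t.length = s.length := by
        have h1 := length_le_of_enc_le h.le
        have h2 := length_le_of_enc_le h.ge
        simp only [List.length_cons] at h1 h2
        omega
      have hlt := enc_lt_pow t
      have hls := enc_lt_pow s
      rw [hlen] at hlt
      simp only [enc, hlen] at h
      have hij : (i : ℕ) = (j : ℕ) := by
        rcases Nat.lt_trichotomy (i:ℕ) (j:ℕ) with hc | hc | hc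
        · exfalso; nlinarith
        · exact hc
        · exfalso; nlinarith
      have hij' : i = j := Fin.ext hij
      subst hij'
      have hts : enc t = enc s := by omega
      rw [ih hts]

lemma enc_append (u v : List (Fin 3)) : enc (u ++ v) = enc u * 4 ^ v.length + enc v := by
  induction u with
  | nil => simp [enc]
  | cons i t ih =>
    have hl : (t ++ v).length = t.length + v.length := List.length_append
    simp only [List.cons_append, enc, List.append_eq, ih, hl, pow_add]
    ring

lemma enc_append_lt_right {u v : List (Fin 3)} (w : List (Fin 3)) (h : enc u < enc v) :
    enc (u ++ w) < enc (v ++ w) := by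
  rw [enc_append, enc_append]
  have h4 : (0:ℕ) < 4 ^ w.length := Nat.pow_pos (by norm_num)
  have := (Nat.mul_lt_mul_right h4).mpr h
  omega

lemma enc_append_le_left {u v : List (Fin 3)} (w : List (Fin 3)) (h : enc u ≤ enc v) :
    enc (w ++ u) ≤ enc (w ++ v) := by
  rw [enc_append, enc_append]
  have hl : u.length ≤ v.length := length_le_of_enc_le h
  have : (4:ℕ) ^ u.length ≤ 4 ^ v.length := Nat.pow_le_pow_right (by norm_num) hl
  have := Nat.mul_le_mul_left (enc w) this
  omega

lemma enc_append_le {u U v V : List (Fin 3)} (hu : enc u ≤ enc U) (hv : enc v ≤ enc V) :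
    enc (u ++ v) ≤ enc (U ++ V) := by
  rcases eq_or_lt_of_le hu with h | h
  · rw [enc_inj h]; exact enc_append_le_left _ hv
  · exact le_trans (enc_append_lt_right v h).le (enc_append_le_left _ hv)

/-- strictness: equality of products with bounded factors forces equality of factors. -/
lemma enc_append_eq {u U v V : List (Fin 3)} (hu : enc u ≤ enc U) (hv : enc v ≤ enc V)
    (h : u ++ v = U ++ V) : u = U ∧ v = V := by
  rcases eq_or_lt_of_le hu with h1 | h1
  · have hU : u = U := enc_inj h1
    subst hU
    exact ⟨rfl, List.append_cancel_left h⟩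
  · exfalso
    have h2 : enc (u ++ v) < enc (U ++ V) :=
      lt_of_lt_of_le (enc_append_lt_right v h1) (enc_append_le_left _ hv)
    rw [h] at h2
    exact lt_irrefl _ h2

/-! ### word substitution -/

/-- substitute `w` for the letter `1` in `m`. -/
def wsub (w : List (Fin 3)) : List (Fin 3) → List (Fin 3)
  | [] => []
  | i :: t => (if i = 1 then w else [i]) ++ wsub w t

lemma wsub_append (w a b : List (Fin 3)) : wsub w (a ++ b) = wsub w a ++ wsub w b := by
  induction a with
  | nil => rfl
  | cons i t ih => simp [wsub, ih]

lemma wsub_id {w m : List (Fin 3)} (h : (1 : Fin 3) ∉ m) : wsub w m = m := by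
  induction m with
  | nil => rfl
  | cons i t ih =>
    have hi : i ≠ 1 := fun hc => h (hc ▸ List.mem_cons_self)
    have ht : wsub w t = t := ih fun hc => h (List.mem_cons_of_mem _ hc)
    simp [wsub, hi, ht]

lemma wsub_one (m : List (Fin 3)) : wsub [1] m = m := by
  induction m with
  | nil => rfl
  | cons i t ih =>
    by_cases hi : i = 1 <;> simp [wsub, hi, ih]

lemma count_wsub (w : List (Fin 3)) (m : List (Fin 3)) :
    (wsub w m).count 1 = m.count 1 * w.count 1 := by
  induction m with
  | nil => simp [wsub]
  | cons i t ih =>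
    by_cases hi : i = 1
    · subst hi
      have hw : wsub w (1 :: t) = w ++ wsub w t := by simp [wsub]
      rw [hw, List.count_append, ih, List.count_cons_self]
      ring
    · have hne : ¬ ((1:Fin 3) = i) := fun hc => hi hc.symm
      have hw : wsub w (i :: t) = [i] ++ wsub w t := by simp [wsub, hi]
      have h0 : List.count 1 [i] = 0 :=
        List.count_eq_zero.mpr (fun hc => hi (List.mem_singleton.mp hc).symm)
      have hb : (i == 1) = false := beq_false_of_ne hi
      rw [hw, List.count_append, ih]
      simp [List.count_cons, hb, h0]

lemma length_wsub (w : List (Fin 3)) (m : List (Fin 3)) :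
    (wsub w m).length = (m.length - m.count 1) + m.count 1 * w.length := by
  induction m with
  | nil => simp [wsub]
  | cons i t ih =>
    have hc : t.count 1 ≤ t.length := List.count_le_length
    by_cases hi : i = 1
    · subst hi
      have hw : wsub w (1 :: t) = w ++ wsub w t := by simp [wsub]
      rw [hw, List.length_append, ih, List.count_cons_self, List.length_cons]
      have hr : (t.count 1 + 1) * w.length = t.count 1 * w.length + w.length := by ring
      rw [hr]
      omega
    · have hne : ¬ ((1:Fin 3) = i) := fun hc => hi hc.symm
      have hw : wsub w (i :: t) = [i] ++ wsub w t := by simp [wsub, hi]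
      have hb : (i == 1) = false := beq_false_of_ne hi
      rw [hw, List.length_append, ih]
      simp only [List.count_cons, hb, Bool.false_eq_true, if_false, Nat.add_zero,
        List.length_cons, List.length_singleton, List.length_nil]
      omega

lemma mem_decomp {m : List (Fin 3)} (h : (1:Fin 3) ∈ m) :
    ∃ a t, m = a ++ 1 :: t ∧ (1:Fin 3) ∉ a := by
  induction m with
  | nil => cases h
  | cons i s ih =>
    by_cases hi : i = 1
    · exact ⟨[], s, by simp [hi], by simp⟩
    · have : (1:Fin 3) ∈ s := by
        rcases List.mem_cons.mp h with h1 | h1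
        · exact absurd h1.symm hi
        · exact h1
      obtain ⟨a, t, rfl, ha⟩ := ih this
      refine ⟨i :: a, t, by simp, ?_⟩
      intro hc
      rcases List.mem_cons.mp hc with h' | h'
      · exact hi h'.symm
      · exact ha h'

/-- the boolean predicate "is not the letter y". -/
def nb (x : Fin 3) : Bool := x != 1

lemma nb_true {x : Fin 3} : nb x = true ↔ x ≠ 1 := by simp [nb]
lemma nb_false {x : Fin 3} : nb x = false ↔ x = 1 := by simp [nb]

lemma takeWhile_append_all {a : List (Fin 3)} (b : List (Fin 3))
    (h : ∀ x ∈ a, nb x = true) : (a ++ b).takeWhile nb = a ++ b.takeWhile nb := by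
  induction a with
  | nil => rfl
  | cons i t ih =>
    simp only [List.cons_append, List.takeWhile_cons, h i (List.mem_cons_self)]
    simp [ih fun x hx => h x (List.mem_cons_of_mem _ hx)]

lemma takeWhile_append_stop {w : List (Fin 3)} (s : List (Fin 3))
    (h : (1:Fin 3) ∈ w) : (w ++ s).takeWhile nb = w.takeWhile nb := by
  induction w with
  | nil => cases h
  | cons i t ih =>
    by_cases hi : nb i = true
    · have hne : i ≠ 1 := nb_true.mp hi
      have h1 : (1:Fin 3) ∈ t := by
        rcases List.mem_cons.mp h with h' | h'
        · exact absurd h'.symm hne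
        · exact h'
      simp only [List.cons_append, List.takeWhile_cons, hi]
      simp [ih h1]
    · have : nb i = false := by revert hi; cases nb i <;> simp
      simp only [List.cons_append, List.takeWhile_cons, this]
      simp

lemma wsub_inj_aux (w : List (Fin 3)) (hw : (1:Fin 3) ∈ w) :
    ∀ n m m', m.count 1 = n → m'.count 1 = n → wsub w m = wsub w m' → m = m' := by
  intro n
  induction n with
  | zero =>
    intro m m' hm hm' h
    have h1 : (1:Fin 3) ∉ m := by
      intro hc; have := List.count_pos_iff.mpr hc; omega
    have h2 : (1:Fin 3) ∉ m' := by
      intro hc; have := List.count_pos_iff.mpr hc; omega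
    rwa [wsub_id h1, wsub_id h2] at h
  | succ n ih =>
    intro m m' hm hm' h
    have h1 : (1:Fin 3) ∈ m := List.count_pos_iff.mp (by omega)
    have h2 : (1:Fin 3) ∈ m' := List.count_pos_iff.mp (by omega)
    obtain ⟨a, t, rfl, ha⟩ := mem_decomp h1
    obtain ⟨a', t', rfl, ha'⟩ := mem_decomp h2
    have hsub : a ++ (w ++ wsub w t) = a' ++ (w ++ wsub w t') := by
      have e1 : wsub w (a ++ 1 :: t) = a ++ (w ++ wsub w t) := by
        rw [wsub_append, wsub_id ha]; simp [wsub]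
      have e2 : wsub w (a' ++ 1 :: t') = a' ++ (w ++ wsub w t') := by
        rw [wsub_append, wsub_id ha']; simp [wsub]
      rw [← e1, ← e2, h]
    have haa : a = a' := by
      have t1 : (a ++ (w ++ wsub w t)).takeWhile nb = a ++ w.takeWhile nb := by
        rw [takeWhile_append_all _ (fun x hx => nb_true.mpr (fun hc => ha (hc ▸ hx))),
          takeWhile_append_stop _ hw]
      have t2 : (a' ++ (w ++ wsub w t')).takeWhile nb = a' ++ w.takeWhile nb := by
        rw [takeWhile_append_all _ (fun x hx => nb_true.mpr (fun hc => ha' (hc ▸ hx))),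
          takeWhile_append_stop _ hw]
      have := t1.symm.trans ((congrArg (List.takeWhile nb) hsub).trans t2)
      exact List.append_cancel_right this
    subst haa
    have hsub2 : wsub w t = wsub w t' :=
      List.append_cancel_left (List.append_cancel_left hsub)
    have hca : a.count 1 = 0 := List.count_eq_zero.mpr ha
    have hct : t.count 1 = n := by
      have h5 : (a ++ 1 :: t).count 1 = a.count 1 + (t.count 1 + 1) := by
        simp [List.count_append, List.count_cons_self]
      omega
    have hct' : t'.count 1 = n := by
      have h5 : (a ++ 1 :: t').count 1 = a.count 1 + (t'.count 1 + 1) := by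
        simp [List.count_append, List.count_cons_self]
      omega
    rw [ih t t' hct hct' hsub2]

lemma wsub_inj {w m m' : List (Fin 3)} (hw : (1:Fin 3) ∈ w)
    (hc : m.count 1 = m'.count 1) (h : wsub w m = wsub w m') : m = m' :=
  wsub_inj_aux w hw (m.count 1) m m' rfl hc.symm h

/-! ### the monoid algebra -/

instance : DecidableEq (FreeMonoid (Fin 3)) := fun a b =>
  decidable_of_iff (a.toList = b.toList) FreeMonoid.toList.injective.eq_iff

/-- number of occurrences of `y` in a word. -/
def cntW (u : FreeMonoid (Fin 3)) : ℕ := u.toList.count 1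

variable {K}

/-- filter, with the correct target type `FA K` (not the pointwise-mul Finsupp type). -/
def cf (p : FreeMonoid (Fin 3) → Prop) [DecidablePred p] (f : FA K) : FA K :=
  MonoidAlgebra.ofCoeff (Finsupp.filter p f.coeff)

lemma cf_apply (p : FreeMonoid (Fin 3) → Prop) [DecidablePred p] (f : FA K)
    (a : FreeMonoid (Fin 3)) : (cf p f) a = if p a then f a else 0 :=
  Finsupp.filter_apply p f.coeff a

lemma cf_support (p : FreeMonoid (Fin 3) → Prop) [DecidablePred p] (f : FA K) :
    (cf p f).support = f.support.filter p :=
  Finsupp.support_filter p f.coeff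

lemma cf_pos_add_neg (p : FreeMonoid (Fin 3) → Prop) [DecidablePred p] (f : FA K) :
    cf p f + cf (fun a => ¬ p a) f = f :=
  MonoidAlgebra.coeff_injective (Finsupp.filter_pos_add_filter_neg f.coeff p)

lemma cf_add (p : FreeMonoid (Fin 3) → Prop) [DecidablePred p] (f g : FA K) :
    cf p (f + g) = cf p f + cf p g :=
  MonoidAlgebra.coeff_injective Finsupp.filter_add

lemma cf_smul (p : FreeMonoid (Fin 3) → Prop) [DecidablePred p] (c : K) (f : FA K) :
    cf p (c • f) = c • cf p f := by
  apply MonoidAlgebra.coeff_injective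
  ext a
  rw [cf_apply]
  rw [MonoidAlgebra.coeff_smul_apply, MonoidAlgebra.coeff_smul_apply, cf_apply]
  split
  · rfl
  · rw [smul_zero]

lemma cf_sum (p : FreeMonoid (Fin 3) → Prop) [DecidablePred p] {ι : Type}
    (s : Finset ι) (f : ι → FA K) :
    cf p (∑ i ∈ s, f i) = ∑ i ∈ s, cf p (f i) :=
  by
    apply MonoidAlgebra.coeff_injective
    simp only [cf, MonoidAlgebra.coeff_sum, MonoidAlgebra.coeff_ofCoeff]
    exact Finsupp.filter_sum s _

/-- all words of `f` are `≤` the word `M` in the deg-lex encoding. -/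
def Bdd (f : FA K) (M : List (Fin 3)) : Prop := ∀ u ∈ f.support, enc u.toList ≤ enc M

lemma Bdd.mul {f g : FA K} {M N : List (Fin 3)} (hf : Bdd f M) (hg : Bdd g N) :
    Bdd (f * g) (M ++ N) := by
  intro u hu
  have hmem := MonoidAlgebra.support_coeff_mul_subset f g hu
  rw [Finset.mem_mul] at hmem
  obtain ⟨a, ha, b, hb, rfl⟩ := hmem
  exact enc_append_le (hf a ha) (hg b hb)

lemma mul_coeff_top {f g : FA K} {M N : List (Fin 3)} (hf : Bdd f M) (hg : Bdd g N) :
    (f * g) (FreeMonoid.ofList (M ++ N))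
      = f (FreeMonoid.ofList M) * g (FreeMonoid.ofList N) := by
  classical
  have key : ∀ a₁ ∈ f.support, ∀ a₂ ∈ g.support,
      a₁ * a₂ = FreeMonoid.ofList (M ++ N) →
        a₁ = FreeMonoid.ofList M ∧ a₂ = FreeMonoid.ofList N := by
    intro a₁ h₁ a₂ h₂ hmul
    have hl : a₁.toList ++ a₂.toList = M ++ N := congrArg FreeMonoid.toList hmul
    have := enc_append_eq (hf a₁ h₁) (hg a₂ h₂) hl
    exact ⟨FreeMonoid.toList.injective this.1, FreeMonoid.toList.injective this.2⟩
  rw [MonoidAlgebra.mul_apply]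
  simp only [Finsupp.sum]
  have step1 : (∑ a₁ ∈ f.support, ∑ a₂ ∈ g.support,
        if a₁ * a₂ = FreeMonoid.ofList (M ++ N) then f a₁ * g a₂ else 0)
      = ∑ a₁ ∈ f.support, if a₁ = FreeMonoid.ofList M then
          (∑ a₂ ∈ g.support, if a₂ = FreeMonoid.ofList N then f a₁ * g a₂ else 0) else 0 := by
    refine Finset.sum_congr rfl (fun a₁ h₁ => ?_)
    by_cases hA : a₁ = FreeMonoid.ofList M
    · rw [if_pos hA]
      refine Finset.sum_congr rfl (fun a₂ h₂ => ?_)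
      by_cases hB : a₂ = FreeMonoid.ofList N
      · rw [if_pos hB, if_pos (by rw [hA, hB]; rfl)]
      · rw [if_neg hB, if_neg (fun hc => hB (key a₁ h₁ a₂ h₂ hc).2)]
    · rw [if_neg hA]
      apply Finset.sum_eq_zero
      intro a₂ h₂
      rw [if_neg (fun hc => hA (key a₁ h₁ a₂ h₂ hc).1)]
  rw [step1]
  rw [Finset.sum_ite_eq' f.support (FreeMonoid.ofList M)]
  by_cases hM : FreeMonoid.ofList M ∈ f.support
  · rw [if_pos hM, Finset.sum_ite_eq' g.support (FreeMonoid.ofList N)]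
    by_cases hN : FreeMonoid.ofList N ∈ g.support
    · rw [if_pos hN]
    · rw [if_neg hN, Finsupp.notMem_support_iff.mp hN, mul_zero]
  · rw [if_neg hM, Finsupp.notMem_support_iff.mp hM, zero_mul]

variable (K)

/-- image of a letter under the substitution sending `y ↦ f`. -/
def sub1 (f : FA K) (i : Fin 3) : FA K := if i = 1 then f else Xv K i

/-- image of a word under the substitution sending `y ↦ f`. -/
def Hm (f : FA K) (m : List (Fin 3)) : FA K := (m.map (sub1 K f)).prod

/-- the substitution map `y ↦ f` applied to `g`. -/
def Ssub (f g : FA K) : FA K := ∑ m ∈ g.support, g m • Hm K f m.toList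

variable {K}

lemma Hm_nil (f : FA K) : Hm K f [] = 1 := rfl

lemma Hm_cons (f : FA K) (i : Fin 3) (t : List (Fin 3)) :
    Hm K f (i :: t) = sub1 K f i * Hm K f t := by
  simp [Hm]

lemma Xv_eq_single (i : Fin 3) : Xv K i = MonoidAlgebra.single (FreeMonoid.of i) 1 := rfl

lemma Xv_support (i : Fin 3) : (Xv K i).support = {FreeMonoid.of i} := by
  rw [Xv_eq_single]
  exact Finsupp.support_single_ne_zero _ one_ne_zero

lemma one_support : (1 : FA K).support = {(1 : FreeMonoid (Fin 3))} := by
  rw [MonoidAlgebra.one_def]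
  exact Finsupp.support_single_ne_zero _ one_ne_zero

lemma Hm_bdd_coeff {f : FA K} {w : List (Fin 3)} (hf : Bdd f w) (m : List (Fin 3)) :
    Bdd (Hm K f m) (wsub w m) ∧
      (Hm K f m) (FreeMonoid.ofList (wsub w m)) = (f (FreeMonoid.ofList w)) ^ (m.count 1) := by
  induction m with
  | nil =>
    constructor
    · intro u hu
      rw [Hm_nil, one_support, Finset.mem_singleton] at hu
      subst hu
      exact le_refl _
    · have : (FreeMonoid.ofList (wsub w []) : FreeMonoid (Fin 3)) = 1 := rfl
      rw [Hm_nil, this, MonoidAlgebra.one_def]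
      simp [Finsupp.single_eq_same]
  | cons i t ih =>
    by_cases hi : i = 1
    · subst hi
      have hw' : wsub w (1 :: t) = w ++ wsub w t := by simp [wsub]
      have hs : sub1 K f 1 = f := by simp [sub1]
      rw [Hm_cons, hs, hw']
      constructor
      · exact Bdd.mul hf ih.1
      · rw [mul_coeff_top hf ih.1, ih.2, List.count_cons_self, pow_succ]
        ring
    · have hw' : wsub w (i :: t) = [i] ++ wsub w t := by simp [wsub, hi]
      have hs : sub1 K f i = Xv K i := by simp [sub1, hi]
      have hXb : Bdd (Xv K i) [i] := by
        intro u hu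
        rw [Xv_support, Finset.mem_singleton] at hu
        subst hu
        exact le_refl _
      rw [Hm_cons, hs, hw']
      constructor
      · exact Bdd.mul hXb ih.1
      · have hXc : (Xv K i) (FreeMonoid.ofList [i]) = 1 := by
          rw [Xv_eq_single]
          exact Finsupp.single_eq_same
        have hcc : (i :: t).count 1 = t.count 1 := by
          rw [List.count_cons, beq_false_of_ne hi]
          simp
        rw [mul_coeff_top hXb ih.1, hXc, ih.2, one_mul, hcc]

lemma Hm_cnt_le {f : FA K} {e : ℕ} (hf : ∀ u ∈ f.support, cntW u ≤ e) (m : List (Fin 3)) :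
    ∀ u ∈ (Hm K f m).support, cntW u ≤ m.count 1 * e := by
  induction m with
  | nil =>
    intro u hu
    rw [Hm_nil, one_support, Finset.mem_singleton] at hu
    subst hu
    simp [cntW]
  | cons i t ih =>
    intro u hu
    rw [Hm_cons] at hu
    have hmem := MonoidAlgebra.support_coeff_mul_subset _ _ hu
    rw [Finset.mem_mul] at hmem
    obtain ⟨a, ha, b, hb, rfl⟩ := hmem
    have hcu : cntW (a * b) = cntW a + cntW b := by
      show (a.toList ++ b.toList).count 1 = _
      exact List.count_append
    have hbb := ih b hb
    by_cases hi : i = 1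
    · subst hi
      have : sub1 K f 1 = f := by simp [sub1]
      rw [this] at ha
      have haa := hf a ha
      rw [List.count_cons_self, hcu]
      have : (t.count 1 + 1) * e = t.count 1 * e + e := by ring
      omega
    · have : sub1 K f i = Xv K i := by simp [sub1, hi]
      rw [this] at ha; change a ∈ MonoidAlgebra.support (Xv K i) at ha
      rw [Xv_support, Finset.mem_singleton] at ha
      subst ha
      have haa : cntW (FreeMonoid.of i) = 0 := by
        show ([i].count 1) = 0
        exact List.count_eq_zero.mpr (fun hc => hi (List.mem_singleton.mp hc).symm)
      have hcc : (i :: t).count 1 = t.count 1 := by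
        rw [List.count_cons, beq_false_of_ne hi]
        simp
      rw [hcc, hcu, haa]
      omega

lemma filter_eq_zero_of {h : FA K} {p : FreeMonoid (Fin 3) → Prop} [DecidablePred p]
    (H : ∀ u ∈ h.support, ¬ p u) : cf p h = 0 := by
  apply MonoidAlgebra.coeff_injective
  ext a
  rw [cf_apply]
  split
  · next hp =>
    by_contra hc
    exact H a (Finsupp.mem_support_iff.mpr (by simpa using hc)) hp
  · rfl

lemma filter_eq_self_of {h : FA K} {p : FreeMonoid (Fin 3) → Prop} [DecidablePred p]
    (H : ∀ u ∈ h.support, p u) : cf p h = h :=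
  MonoidAlgebra.coeff_injective <| (Finsupp.filter_eq_self_iff _ _).mpr fun x hx => H x (Finsupp.mem_support_iff.mpr hx)

lemma cntW_mul (a b : FreeMonoid (Fin 3)) : cntW (a * b) = cntW a + cntW b :=
  List.count_append

lemma filter_mul_top {f g : FA K} {a b : ℕ}
    (hf : ∀ u ∈ f.support, cntW u ≤ a) (hg : ∀ u ∈ g.support, cntW u ≤ b) :
    cf (fun u => cntW u = a + b) (f * g)
      = cf (fun u => cntW u = a) f * cf (fun u => cntW u = b) g := by
  classical
  set fa := cf (fun u => cntW u = a) f with hfa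
  set f' := cf (fun u => ¬ cntW u = a) f with hf'
  set gb := cf (fun u => cntW u = b) g with hgb
  set g' := cf (fun u => ¬ cntW u = b) g with hg'
  have hfd : fa + f' = f := cf_pos_add_neg _ f
  have hgd : gb + g' = g := cf_pos_add_neg _ g
  have hfa_mem : ∀ u ∈ fa.support, cntW u = a := by
    intro u hu
    rw [hfa, cf_support, Finset.mem_filter] at hu
    exact hu.2
  have hgb_mem : ∀ u ∈ gb.support, cntW u = b := by
    intro u hu
    rw [hgb, cf_support, Finset.mem_filter] at hu
    exact hu.2
  have hf'_mem : ∀ u ∈ f'.support, cntW u < a := by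
    intro u hu
    rw [hf', cf_support, Finset.mem_filter] at hu
    have := hf u hu.1
    omega
  have hg'_mem : ∀ u ∈ g'.support, cntW u < b := by
    intro u hu
    rw [hg', cf_support, Finset.mem_filter] at hu
    have := hg u hu.1
    omega
  have hexp : f * g = fa * gb + (fa * g' + f' * g) := by
    calc f * g = (fa + f') * g := by rw [hfd]
    _ = fa * g + f' * g := add_mul _ _ _
    _ = fa * (gb + g') + f' * g := by rw [hgd]
    _ = fa * gb + (fa * g' + f' * g) := by rw [mul_add, add_assoc]
  rw [hexp, cf_add _ _ _, cf_add _ _ _]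
  have h1 : cf (fun u => cntW u = a + b) (fa * gb) = fa * gb := by
    apply filter_eq_self_of
    intro u hu
    have hmem := MonoidAlgebra.support_coeff_mul_subset _ _ hu
    rw [Finset.mem_mul] at hmem
    obtain ⟨x, hx, y, hy, rfl⟩ := hmem
    rw [cntW_mul, hfa_mem x hx, hgb_mem y hy]
  have h2 : cf (fun u => cntW u = a + b) (fa * g') = 0 := by
    apply filter_eq_zero_of
    intro u hu
    have hmem := MonoidAlgebra.support_coeff_mul_subset _ _ hu
    rw [Finset.mem_mul] at hmem
    obtain ⟨x, hx, y, hy, rfl⟩ := hmem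
    rw [cntW_mul, hfa_mem x hx]
    have := hg'_mem y hy
    omega
  have h3 : cf (fun u => cntW u = a + b) (f' * g) = 0 := by
    apply filter_eq_zero_of
    intro u hu
    have hmem := MonoidAlgebra.support_coeff_mul_subset _ _ hu
    rw [Finset.mem_mul] at hmem
    obtain ⟨x, hx, y, hy, rfl⟩ := hmem
    rw [cntW_mul]
    have h4 := hf'_mem x hx
    have h5 := hg y hy
    omega
  rw [h1, h2, h3, add_zero, add_zero]

lemma filter_Hm {q : FA K} {e : ℕ} (hq : ∀ u ∈ q.support, cntW u ≤ e) (m : List (Fin 3)) :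
    cf (fun u => cntW u = m.count 1 * e) (Hm K q m)
      = Hm K (cf (fun u => cntW u = e) q) m := by
  induction m with
  | nil =>
    rw [Hm_nil, Hm_nil]
    apply filter_eq_self_of
    intro u hu
    rw [one_support, Finset.mem_singleton] at hu
    subst hu
    simp [cntW]
  | cons i t ih =>
    by_cases hi : i = 1
    · subst hi
      have hs : sub1 K q 1 = q := by simp [sub1]
      have hs2 : sub1 K (cf (fun u => cntW u = e) q) 1
          = cf (fun u => cntW u = e) q := by simp [sub1]
      have hcc : (1 :: t).count 1 * e = e + t.count 1 * e := by
        rw [List.count_cons_self]; ring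
      rw [Hm_cons, Hm_cons, hs, hs2, hcc, filter_mul_top hq (Hm_cnt_le hq t), ih]
    · have hs : sub1 K q i = Xv K i := by simp [sub1, hi]
      have hs2 : sub1 K (cf (fun u => cntW u = e) q) i = Xv K i := by
        simp [sub1, hi]
      have hXc : ∀ u ∈ (Xv K i).support, cntW u ≤ 0 := by
        intro u hu
        rw [Xv_support, Finset.mem_singleton] at hu
        subst hu
        have : cntW (FreeMonoid.of i) = 0 :=
          List.count_eq_zero.mpr (fun hc => hi (List.mem_singleton.mp hc).symm)
        omega
      have hcc : (i :: t).count 1 * e = 0 + t.count 1 * e := by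
        rw [List.count_cons, beq_false_of_ne hi]
        simp
      have hfX : cf (fun u => cntW u = 0) (Xv K i) = Xv K i := by
        apply filter_eq_self_of
        intro u hu
        rw [Xv_support, Finset.mem_singleton] at hu
        subst hu
        exact List.count_eq_zero.mpr (fun hc => hi (List.mem_singleton.mp hc).symm)
      rw [Hm_cons, Hm_cons, hs, hs2, hcc, filter_mul_top hXc (Hm_cnt_le hq t), hfX, ih]

lemma Ssub_apply (f g : FA K) (u : FreeMonoid (Fin 3)) :
    (Ssub K f g) u = ∑ m ∈ g.support, g m * (Hm K f m.toList) u := by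
  rw [Ssub]
  rw [MonoidAlgebra.coeff_sum, Finsupp.coe_finset_sum, Finset.sum_apply]
  refine Finset.sum_congr rfl (fun m hm => ?_)
  rw [MonoidAlgebra.coeff_smul_apply]
  rfl

/-- the key leading-coefficient lemma. -/
lemma key_coeff {P Q : FA K} (hP : P ≠ 0) (hQ : Q ≠ 0) {e d : ℕ}
    (hPh : ∀ u ∈ P.support, cntW u = e) (he : 1 ≤ e) (hQh : ∀ m ∈ Q.support, cntW m = d) :
    ∃ w ∈ P.support, ∃ mh ∈ Q.support,
      (Ssub K P Q) (FreeMonoid.ofList (wsub w.toList mh.toList)) = Q mh * (P w) ^ d ∧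
      (∀ m ∈ Q.support, enc (wsub w.toList m.toList) ≤ enc (wsub w.toList mh.toList)) := by
  obtain ⟨w, hw, hwmax⟩ := Finset.exists_max_image P.support (fun u => enc u.toList)
    (Finsupp.support_nonempty_iff.mpr (fun hc => hP (MonoidAlgebra.coeff_eq_zero.mp hc)))
  obtain ⟨mh, hmh, hmhmax⟩ := Finset.exists_max_image Q.support
    (fun m => enc (wsub w.toList m.toList)) (Finsupp.support_nonempty_iff.mpr (fun hc => hQ (MonoidAlgebra.coeff_eq_zero.mp hc)))
  have hBP : Bdd P w.toList := fun u hu => hwmax u hu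
  have hw1 : (1 : Fin 3) ∈ w.toList := by
    have h1 : cntW w = e := hPh w hw
    have h2 : 0 < cntW w := by omega
    exact List.count_pos_iff.mp h2
  refine ⟨w, hw, mh, hmh, ?_, fun m hm => hmhmax m hm⟩
  rw [Ssub_apply]
  rw [Finset.sum_eq_single_of_mem mh hmh]
  · have hofw : (FreeMonoid.ofList w.toList) = w := rfl
    rw [(Hm_bdd_coeff hBP mh.toList).2, hofw]
    rw [show (FreeMonoid.toList mh).count 1 = d from hQh mh hmh]
  · intro m hm hne
    have hz : (Hm K P m.toList) (FreeMonoid.ofList (wsub w.toList mh.toList)) = 0 := by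
      by_contra hc
      have hmem : FreeMonoid.ofList (wsub w.toList mh.toList) ∈ (Hm K P m.toList).support :=
        Finsupp.mem_support_iff.mpr hc
      have h1 := (Hm_bdd_coeff hBP m.toList).1 _ hmem
      have h2 := hmhmax m hm
      have heq : wsub w.toList m.toList = wsub w.toList mh.toList := by
        apply enc_inj
        have : (FreeMonoid.ofList (wsub w.toList mh.toList)).toList
            = wsub w.toList mh.toList := rfl
        rw [this] at h1
        omega
      have hcnt : m.toList.count 1 = mh.toList.count 1 := by
        have a1 : cntW m = d := hQh m hm
        have a2 : cntW mh = d := hQh mh hmh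
        show cntW m = cntW mh
        omega
      have : m.toList = mh.toList := wsub_inj hw1 hcnt heq
      exact absurd (FreeMonoid.toList.injective this) hne
    rw [hz, mul_zero]

lemma Hm_id {f : FA K} {m : List (Fin 3)} (hm : (1 : Fin 3) ∉ m) :
    Hm K f m = MonoidAlgebra.single (FreeMonoid.ofList m) 1 := by
  induction m with
  | nil => rw [Hm_nil, MonoidAlgebra.one_def]; rfl
  | cons i t ih =>
    have hi : i ≠ 1 := fun hc => hm (hc ▸ List.mem_cons_self)
    have hs : sub1 K f i = Xv K i := by simp [sub1, hi]
    rw [Hm_cons, hs, ih (fun hc => hm (List.mem_cons_of_mem _ hc)), Xv_eq_single,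
      MonoidAlgebra.single_mul_single, one_mul]
    rfl

lemma Ssub_yfree {f g : FA K} (hg : ∀ m ∈ g.support, cntW m = 0) : Ssub K f g = g := by
  rw [Ssub]
  have : ∀ m ∈ g.support, g m • Hm K f m.toList = MonoidAlgebra.single m (g m) := by
    intro m hm
    have h1 : (1 : Fin 3) ∉ m.toList := by
      have := hg m hm
      exact List.count_eq_zero.mp this
    rw [Hm_id h1]
    have : (FreeMonoid.ofList m.toList) = m := rfl
    rw [this, MonoidAlgebra.smul_single', mul_one]
  rw [Finset.sum_congr rfl this]
  have h4 := MonoidAlgebra.sum_single g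
  rwa [Finsupp.sum] at h4

lemma subst_eq (ψ : FA K →ₐ[K] FA K) (h0 : ψ (Xv K 0) = Xv K 0) (h2 : ψ (Xv K 2) = Xv K 2)
    (g : FA K) : ψ g = Ssub K (ψ (Xv K 1)) g := by
  have hsingle : ∀ m : List (Fin 3),
      ψ (MonoidAlgebra.single (FreeMonoid.ofList m) 1) = Hm K (ψ (Xv K 1)) m := by
    intro m
    induction m with
    | nil =>
      rw [Hm_nil]
      have h5 : (MonoidAlgebra.single (FreeMonoid.ofList ([] : List (Fin 3))) (1:K)) = 1 := by
        rw [MonoidAlgebra.one_def]; rfl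
      rw [h5, map_one]
    | cons i t ih =>
      have hsplit : (MonoidAlgebra.single (FreeMonoid.ofList (i :: t)) (1 : K))
          = MonoidAlgebra.single (FreeMonoid.of i) 1
            * MonoidAlgebra.single (FreeMonoid.ofList t) 1 := by
        rw [MonoidAlgebra.single_mul_single, one_mul]
        rfl
      rw [hsplit, map_mul, ih, Hm_cons]
      congr 1
      rw [← Xv_eq_single]
      fin_cases i
      · show ψ (Xv K 0) = sub1 K (ψ (Xv K 1)) 0
        rw [h0]; rfl
      · show ψ (Xv K 1) = sub1 K (ψ (Xv K 1)) 1
        rfl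
      · show ψ (Xv K 2) = sub1 K (ψ (Xv K 1)) 2
        rw [h2]; rfl
  have hsingle' : ∀ m : FreeMonoid (Fin 3),
      ψ (MonoidAlgebra.single m (1:K)) = Hm K (ψ (Xv K 1)) m.toList :=
    fun m => hsingle m.toList
  conv_lhs => rw [← MonoidAlgebra.sum_single g]
  rw [Finsupp.sum, map_sum]
  rw [Ssub]
  refine Finset.sum_congr rfl (fun m hm => ?_)
  have h1 : ∀ b : K, (MonoidAlgebra.single m b : FA K) = b • MonoidAlgebra.single m (1:K) := by
    intro b
    rw [MonoidAlgebra.smul_single', mul_one]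
  rw [h1, map_smul, hsingle']

lemma yfree_mem_adjoin {f : FA K} (hf : ∀ u ∈ f.support, cntW u = 0) :
    f ∈ Algebra.adjoin K {Xv K 0, Xv K 2} := by
  have hsingle : ∀ m : List (Fin 3), (1 : Fin 3) ∉ m →
      MonoidAlgebra.single (FreeMonoid.ofList m) (1:K) ∈ Algebra.adjoin K {Xv K 0, Xv K 2} := by
    intro m
    induction m with
    | nil =>
      intro _
      have h5 : (MonoidAlgebra.single (FreeMonoid.ofList ([] : List (Fin 3))) (1:K)) = 1 := by
        rw [MonoidAlgebra.one_def]; rfl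
      rw [h5]
      exact Subalgebra.one_mem _
    | cons i t ih =>
      intro hm
      have hi : i ≠ 1 := fun hc => hm (hc ▸ List.mem_cons_self)
      have hsplit : (MonoidAlgebra.single (FreeMonoid.ofList (i :: t)) (1 : K))
          = Xv K i * MonoidAlgebra.single (FreeMonoid.ofList t) 1 := by
        rw [Xv_eq_single, MonoidAlgebra.single_mul_single, one_mul]
        rfl
      rw [hsplit]
      have hXv : Xv K i ∈ Algebra.adjoin K {Xv K 0, Xv K 2} := by
        fin_cases i
        · exact Algebra.subset_adjoin (by simp)
        · exact absurd rfl hi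
        · exact Algebra.subset_adjoin (by simp)
      exact mul_mem hXv (ih (fun hc => hm (List.mem_cons_of_mem _ hc)))
  have hsingle' : ∀ m : FreeMonoid (Fin 3), cntW m = 0 →
      (MonoidAlgebra.single m (1:K) : FA K) ∈ Algebra.adjoin K {Xv K 0, Xv K 2} :=
    fun m hm => hsingle m.toList (List.count_eq_zero.mp hm)
  have hrepr := MonoidAlgebra.sum_single f
  rw [Finsupp.sum] at hrepr
  rw [← hrepr]
  apply Subalgebra.sum_mem
  intro m hm
  have h1 : ∀ b : K, (MonoidAlgebra.single m b : FA K) = b • MonoidAlgebra.single m (1:K) := by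
    intro b
    rw [MonoidAlgebra.smul_single', mul_one]
  rw [h1]
  exact Subalgebra.smul_mem _ (hsingle' m (hf m hm)) _

lemma Xv_one_ne_zero : (Xv K 1 : FA K) ≠ 0 := by
  intro hc
  have h1 : (Xv K 1) (FreeMonoid.of 1) = 1 := by
    rw [Xv_eq_single]; exact Finsupp.single_eq_same
  rw [hc] at h1
  exact one_ne_zero h1.symm

lemma cntW_of_one : cntW (FreeMonoid.of (1 : Fin 3)) = 1 := by decide

lemma list_single_one {l : List (Fin 3)} (h1 : l.length = 1) (h2 : l.count 1 = 1) :
    l = [1] := by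
  match l, h1 with
  | [i], _ =>
    have h3 : (1 : Fin 3) ∈ [i] := List.count_pos_iff.mp (by omega)
    rw [← List.mem_singleton.mp h3]

theorem partA (θ : FA K ≃ₐ[K] FA K) (hx : θ (Xv K 0) = Xv K 0) (hz : θ (Xv K 2) = Xv K 2) :
    ∃ (β : Kˣ) (r : FA K), r ∈ Algebra.adjoin K {Xv K 0, Xv K 2} ∧
      θ (Xv K 1) = (β : K) • Xv K 1 + r := by
  classical
  set p : FA K := θ (Xv K 1) with hp
  set q : FA K := θ.symm (Xv K 1) with hq
  have hsx : θ.symm (Xv K 0) = Xv K 0 := by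
    conv_lhs => rw [← hx]
    exact θ.symm_apply_apply _
  have hsz : θ.symm (Xv K 2) = Xv K 2 := by
    conv_lhs => rw [← hz]
    exact θ.symm_apply_apply _
  have hE : Ssub K q p = Xv K 1 := by
    have h1 := subst_eq (θ.symm.toAlgHom) hsx hsz p
    have h2 : (θ.symm.toAlgHom) p = Xv K 1 := by
      show θ.symm p = Xv K 1
      rw [hp]
      exact θ.symm_apply_apply _
    have h3 : Ssub K q p = Ssub K (θ.symm.toAlgHom (Xv K 1)) p := rfl
    rw [h3, ← h1, h2]
  have hp0 : p ≠ 0 := by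
    intro hc
    apply Xv_one_ne_zero (K := K)
    have h4 := congrArg θ.symm hc
    rw [hp, θ.symm_apply_apply, map_zero] at h4
    exact h4
  have hq0 : q ≠ 0 := by
    intro hc
    apply Xv_one_ne_zero (K := K)
    have h4 := congrArg θ hc
    rw [hq, θ.apply_symm_apply, map_zero] at h4
    exact h4
  set d : ℕ := p.support.sup cntW with hd
  set e : ℕ := q.support.sup cntW with he
  have hdle : ∀ m ∈ p.support, cntW m ≤ d := fun m hm => Finset.le_sup hm
  have hele : ∀ u ∈ q.support, cntW u ≤ e := fun u hu => Finset.le_sup hu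
  obtain ⟨m₀, hm₀, hm₀d⟩ := Finset.exists_mem_eq_sup p.support
    (Finsupp.support_nonempty_iff.mpr (fun hc => hp0 (MonoidAlgebra.coeff_eq_zero.mp hc))) cntW
  obtain ⟨u₀, hu₀, hu₀e⟩ := Finset.exists_mem_eq_sup q.support
    (Finsupp.support_nonempty_iff.mpr (fun hc => hq0 (MonoidAlgebra.coeff_eq_zero.mp hc))) cntW
  have hy1 : (FreeMonoid.of 1) ∈ (Ssub K q p).support := by
    rw [hE, Xv_support]
    exact Finset.mem_singleton_self _
  have hd1 : 1 ≤ d := by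
    by_contra hc
    have hall : ∀ m ∈ p.support, cntW m = 0 := fun m hm => by
      have := hdle m hm; omega
    have h5 := Ssub_yfree (f := q) hall
    rw [h5] at hE
    have h6 : (FreeMonoid.of 1) ∈ p.support := by
      rw [hE, Xv_support]; exact Finset.mem_singleton_self _
    have h7 := hall _ h6
    rw [cntW_of_one] at h7
    exact one_ne_zero h7
  have he1 : 1 ≤ e := by
    by_contra hc
    have hall : ∀ u ∈ q.support, cntW u ≤ 0 := fun u hu => by
      have := hele u hu; omega
    rw [Ssub, MonoidAlgebra.support, MonoidAlgebra.coeff_sum] at hy1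
    obtain ⟨m, hm, hmem⟩ := Finsupp.mem_support_finset_sum _ hy1
    have hmem2 : (FreeMonoid.of 1) ∈ (Hm K q m.toList).support :=
      Finsupp.support_smul hmem
    have h8 := Hm_cnt_le hall m.toList _ hmem2
    rw [cntW_of_one] at h8
    omega
  set pd : FA K := cf (fun u => cntW u = d) p with hpd
  set qe : FA K := cf (fun u => cntW u = e) q with hqe
  have hpdmem : ∀ m ∈ pd.support, cntW m = d := by
    intro m hm
    rw [hpd, cf_support, Finset.mem_filter] at hm
    exact hm.2
  have hqemem : ∀ u ∈ qe.support, cntW u = e := by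
    intro u hu
    rw [hqe, cf_support, Finset.mem_filter] at hu
    exact hu.2
  have hpd0 : pd ≠ 0 := by
    rw [Ne, ← MonoidAlgebra.coeff_eq_zero, ← Ne, ← Finsupp.support_nonempty_iff]
    refine ⟨m₀, (?_ : m₀ ∈ MonoidAlgebra.support _)⟩
    rw [hpd, cf_support, Finset.mem_filter]
    exact ⟨hm₀, hm₀d.symm⟩
  have hqe0 : qe ≠ 0 := by
    rw [Ne, ← MonoidAlgebra.coeff_eq_zero, ← Ne, ← Finsupp.support_nonempty_iff]
    refine ⟨u₀, (?_ : u₀ ∈ MonoidAlgebra.support _)⟩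
    rw [hqe, cf_support, Finset.mem_filter]
    exact ⟨hu₀, hu₀e.symm⟩
  have step : ∀ m ∈ p.support, cf (fun u => cntW u = d * e) (p m • Hm K q m.toList)
      = if cntW m = d then p m • Hm K qe m.toList else 0 := by
    intro m hm
    rw [cf_smul]
    by_cases hmd : cntW m = d
    · rw [if_pos hmd]
      congr 1
      have h9 := filter_Hm hele m.toList
      rw [show (FreeMonoid.toList m).count 1 = d from hmd] at h9
      rw [← hqe] at h9
      exact h9
    · rw [if_neg hmd]
      have hz9 : cf (fun u => cntW u = d * e) (Hm K q m.toList) = 0 := by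
        apply filter_eq_zero_of
        intro u hu
        have h5 := Hm_cnt_le hele m.toList u hu
        have h6 : cntW m < d := lt_of_le_of_ne (hdle m hm) hmd
        have h7 : cntW m * e < d * e :=
          (Nat.mul_lt_mul_right (by omega : 0 < e)).mpr h6
        have h8 : (FreeMonoid.toList m).count 1 = cntW m := rfl
        rw [h8] at h5
        omega
      rw [hz9, smul_zero]
  have hE2 : Ssub K qe pd = cf (fun u => cntW u = d * e) (Xv K 1) := by
    conv_rhs => rw [← hE, Ssub, cf_sum]
    rw [Finset.sum_congr rfl step, ← Finset.sum_filter, Ssub]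
    refine Finset.sum_congr ?_ ?_
    · rw [hpd, cf_support]
    · intro m hm
      have h10 : pd m = p m := by
        rw [hpd, cf_apply, if_pos (hpdmem m hm)]
      rw [h10]
  by_cases hde : d * e = 1
  · -- main case
    have hdd : d = 1 := by
      have h7 : d ≤ d * e := Nat.le_mul_of_pos_right d (by omega)
      omega
    have hee : e = 1 := by
      rw [hdd, one_mul] at hde
      exact hde
    have hXf : cf (fun u => cntW u = d * e) (Xv K 1) = Xv K 1 := by
      apply filter_eq_self_of
      intro u hu
      rw [Xv_support, Finset.mem_singleton] at hu
      subst hu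
      rw [cntW_of_one, hde]
    rw [hXf] at hE2
    obtain ⟨w, hw, mh, hmh, hcoeff, hmax⟩ :=
      key_coeff hqe0 hpd0 hqemem he1 hpdmem
    rw [hE2] at hcoeff
    have hcne : pd mh * (qe w) ^ d ≠ 0 :=
      mul_ne_zero (Finsupp.mem_support_iff.mp hmh)
        (pow_ne_zero _ (Finsupp.mem_support_iff.mp hw))
    have hmem : FreeMonoid.ofList (wsub w.toList mh.toList) ∈ (Xv K 1).support := by
      rw [Finsupp.mem_support_iff, hcoeff]
      exact hcne
    rw [Xv_support, Finset.mem_singleton] at hmem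
    have hM : wsub w.toList mh.toList = [1] := congrArg FreeMonoid.toList hmem
    have hcm : (FreeMonoid.toList mh).count 1 = 1 := by
      have := hpdmem mh hmh
      rw [hdd] at this
      exact this
    have hcw : (FreeMonoid.toList w).count 1 = 1 := by
      have := hqemem w hw
      rw [hee] at this
      exact this
    have hlen := length_wsub w.toList mh.toList
    rw [hM, hcm] at hlen
    have hlm : (FreeMonoid.toList mh).length ≥ 1 := by
      have := List.count_le_length (a := 1) (l := FreeMonoid.toList mh)
      omega
    have hlw : (FreeMonoid.toList w).length ≥ 1 := by
      have := List.count_le_length (a := 1) (l := FreeMonoid.toList w)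
      omega
    have hlen1 : (FreeMonoid.toList mh).length = 1 ∧ (FreeMonoid.toList w).length = 1 := by
      simp only [List.length_singleton] at hlen
      constructor <;> omega
    have hmh1 : FreeMonoid.toList mh = [1] := list_single_one hlen1.1 hcm
    have hw1 : FreeMonoid.toList w = [1] := list_single_one hlen1.2 hcw
    -- every word of pd is [1]
    have hsub : pd.support ⊆ {FreeMonoid.of 1} := by
      intro m hm
      have h11 := hmax m hm
      rw [hw1, wsub_one, wsub_one, hmh1] at h11
      have h12 : (FreeMonoid.toList m).length ≤ 1 := by
        have := length_le_of_enc_le h11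
        simpa using this
      have h13 : (FreeMonoid.toList m).count 1 = 1 := by
        have := hpdmem m hm
        rw [hdd] at this
        exact this
      have h14 : (FreeMonoid.toList m).length = 1 := by
        have := List.count_le_length (a := 1) (l := FreeMonoid.toList m)
        omega
      have h15 : FreeMonoid.toList m = [1] := list_single_one h14 h13
      rw [Finset.mem_singleton]
      exact FreeMonoid.toList.injective h15
    have hpdsingle : pd = MonoidAlgebra.single (FreeMonoid.of 1) (pd (FreeMonoid.of 1)) :=
      MonoidAlgebra.coeff_injective (Finsupp.support_subset_singleton.mp hsub)
    set β : K := pd (FreeMonoid.of 1) with hβdef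
    have hβ : β ≠ 0 := by
      intro hc
      have h16 : pd = 0 := by
        rw [hpdsingle, hc]
        exact MonoidAlgebra.single_zero _
      exact hpd0 h16
    refine ⟨Units.mk0 β hβ, cf (fun u => ¬ cntW u = d) p, ?_, ?_⟩
    · apply yfree_mem_adjoin
      intro u hu
      rw [cf_support, Finset.mem_filter] at hu
      have := hdle u hu.1
      have := hu.2
      omega
    · have hdecomp : pd + cf (fun u => ¬ cntW u = d) p = p :=
        cf_pos_add_neg (fun u => cntW u = d) p
      have hβXv : (Units.mk0 β hβ : K) • Xv K 1 = pd := by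
        rw [Units.val_mk0, Xv_eq_single, MonoidAlgebra.smul_single', mul_one, ← hpdsingle]
      rw [hβXv]
      exact hdecomp.symm
  · -- impossible case
    exfalso
    have hXf : cf (fun u => cntW u = d * e) (Xv K 1) = 0 := by
      apply filter_eq_zero_of
      intro u hu
      rw [Xv_support, Finset.mem_singleton] at hu
      subst hu
      rw [cntW_of_one]
      omega
    rw [hXf] at hE2
    obtain ⟨w, hw, mh, hmh, hcoeff, _⟩ :=
      key_coeff hqe0 hpd0 hqemem he1 hpdmem
    rw [hE2] at hcoeff
    have hc0 : (0 : FA K) (FreeMonoid.ofList (wsub w.toList mh.toList)) = 0 := rfl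
    rw [hc0] at hcoeff
    exact mul_ne_zero (Finsupp.mem_support_iff.mp hmh)
      (pow_ne_zero _ (Finsupp.mem_support_iff.mp hw)) hcoeff.symm

variable (K)

/-- (a) Every algebra automorphism `θ` of `K⟨x,y,z⟩` fixing `x` and `z` satisfies
`θ(y) = βy + r(x,z)` with `β ∈ K∖{0}` and `r` in the subalgebra generated by `x` and `z`.
(b) Consequently, two `z`-automorphisms `φ = (f,g)`, `φ' = (f,g')` with the same first
coordinate differ by such a substitution: `φ'(y) = φ(βy + r(x,z))`. -/
theorem aut_fixing_x_z :
    (∀ θ : FA K ≃ₐ[K] FA K, θ (Xv K 0) = Xv K 0 → θ (Xv K 2) = Xv K 2 →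
      ∃ (β : Kˣ) (r : FA K), r ∈ Algebra.adjoin K {Xv K 0, Xv K 2} ∧
        θ (Xv K 1) = (β : K) • Xv K 1 + r) ∧
    (∀ φ φ' : FA K ≃ₐ[K] FA K, φ (Xv K 2) = Xv K 2 → φ' (Xv K 2) = Xv K 2 →
      φ (Xv K 0) = φ' (Xv K 0) →
      ∃ (β : Kˣ) (r : FA K), r ∈ Algebra.adjoin K {Xv K 0, Xv K 2} ∧
        φ' (Xv K 1) = φ ((β : K) • Xv K 1 + r)) := by
  constructor
  · intro θ hx hz
    exact partA θ hx hz
  · intro φ φ' hz hz' hx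
    set θ : FA K ≃ₐ[K] FA K := φ'.trans φ.symm with hθ
    have hθx : θ (Xv K 0) = Xv K 0 := by
      show φ.symm (φ' (Xv K 0)) = Xv K 0
      rw [← hx]
      exact φ.symm_apply_apply _
    have hθz : θ (Xv K 2) = Xv K 2 := by
      show φ.symm (φ' (Xv K 2)) = Xv K 2
      rw [hz']
      conv_lhs => rw [← hz]
      exact φ.symm_apply_apply _
    obtain ⟨β, r, hr, hθy⟩ := partA θ hθx hθz
    refine ⟨β, r, hr, ?_⟩
    have h1 : φ (θ (Xv K 1)) = φ' (Xv K 1) := by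
      show φ (φ.symm (φ' (Xv K 1))) = φ' (Xv K 1)
      exact φ.apply_symm_apply _
    rw [← h1, hθy]
end
end
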